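/- Let k be a commutative ring and H a bialgebra over k with comultiplication Δ (written Δ(b) = Σ b⁽¹⁾ ⊗ b⁽²⁾). Let R = Σ R¹ ⊗ R² ∈ H ⊗ H be invertible and satisfy: Δᵒᵖ(b) = R·Δ(b)·R⁻¹ for all b ∈ H (where Δᵒᵖ = σ ∘ Δ with σ the flip), (Δ ⊗ id)(R) = R₁₃R₂₃, and (id ⊗ Δ)(R) = R₁₃R₁₂ (where R₁₂ = Σ R¹ ⊗ R² ⊗ 1, R₁₃ = Σ R¹ ⊗ 1 ⊗ R², R₂₃ = Σ 1 ⊗ R¹ ⊗ R² in H^{⊗3}). Let A be a k-module with an associative k-bilinear multiplication μ and two commuting H-module structures ρ₁, ρ₂ (i.e. ρ₁(b)ρ₂(b′) = ρ₂(b′)ρ₁(b) on A for all b, b′ ∈ H) such that μ is invariant under the H ⊗ H-action: ρ₁(b)ρ₂(b′)·μ(x,y) = Σ μ(ρ₁(b⁽¹⁾)ρ₂(b′⁽¹⁾)·x, ρ₁(b⁽²⁾)ρ₂(b′⁽²⁾)·y) for all b, b′ ∈ H and x, y ∈ A. Define μ′(x,y) = Σ μ(ρ₂(R¹)·x, ρ₁(R²)·y),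 and let H act on A diagonally by ρ(b) = Σ ρ₁(b⁽¹⁾)ρ₂(b⁽²⁾). Then μ′ is associative and H-invariant for the diagonal action: ρ(b)·μ′(x,y) = Σ μ′(ρ(b⁽¹⁾)·x, ρ(b⁽²⁾)·y) for all b ∈ H, x, y ∈ A. -/

import Mathlib

open scoped TensorProduct

namespace Stmt7

variable (k : Type) [CommRing k]
variable (H : Type) [Ring H] [Bialgebra k H]
variable (A : Type) [AddCommGroup A] [Module k A]

/-- Given two actions `ρ, ρ' : H → End(A)`, the componentwise action of `H ⊗ H` on
`A ⊗ A` in which the first tensor factor acts through `ρ` on the first factor of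
`A ⊗ A` and the second through `ρ'`: `Σ G¹ ⊗ G²` sends `x ⊗ y` to `Σ ρ(G¹)x ⊗ ρ'(G²)y`. -/
noncomputable def act2 (ρ ρ' : H →ₐ[k] Module.End k A) :
    H ⊗[k] H →ₗ[k] (A ⊗[k] A →ₗ[k] A ⊗[k] A) :=
  TensorProduct.homTensorHomMap (RingHom.id k) A A A A ∘ₗ
    TensorProduct.map ρ.toLinearMap ρ'.toLinearMap

/-- `R₁₂ = Σ R¹ ⊗ R² ⊗ 1` in `H⊗³`. -/
noncomputable def ext12 : H ⊗[k] H →ₗ[k] H ⊗[k] (H ⊗[k] H) :=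
  TensorProduct.map LinearMap.id ((TensorProduct.mk k H H).flip 1)

/-- `R₁₃ = Σ R¹ ⊗ 1 ⊗ R²` in `H⊗³`. -/
noncomputable def ext13 : H ⊗[k] H →ₗ[k] H ⊗[k] (H ⊗[k] H) :=
  TensorProduct.map LinearMap.id (TensorProduct.mk k H H 1)

/-- `R₂₃ = Σ 1 ⊗ R¹ ⊗ R²` in `H⊗³`. -/
noncomputable def ext23 : H ⊗[k] H →ₗ[k] H ⊗[k] (H ⊗[k] H) :=
  TensorProduct.mk k H (H ⊗[k] H) 1

/-- `Δ ⊗ id : H⊗² → H⊗³`. -/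
noncomputable def comul12 : H ⊗[k] H →ₗ[k] H ⊗[k] (H ⊗[k] H) :=
  (TensorProduct.assoc k H H H).toLinearMap ∘ₗ
    TensorProduct.map Coalgebra.comul LinearMap.id

/-- `id ⊗ Δ : H⊗² → H⊗³`. -/
noncomputable def comul23 : H ⊗[k] H →ₗ[k] H ⊗[k] (H ⊗[k] H) :=
  TensorProduct.map LinearMap.id Coalgebra.comul

/-- The diagonal action `ρ(b) = Σ ρ₁(b⁽¹⁾)ρ₂(b⁽²⁾)` of `H` on `A` obtained from two
commuting actions `ρ₁, ρ₂` via the comultiplication. -/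
noncomputable def diagAct (ρ₁ ρ₂ : H →ₐ[k] Module.End k A) :
    H →ₗ[k] Module.End k A :=
  TensorProduct.lift
      ((LinearMap.mul k (Module.End k A)).compl₁₂ ρ₁.toLinearMap ρ₂.toLinearMap) ∘ₗ
    Coalgebra.comul

section Helpers
open TensorProduct

variable (ρa ρb ρc : H →ₐ[k] Module.End k A)

lemma act2_tmul (b c : H) : act2 k H A ρa ρb (b ⊗ₜ[k] c) = TensorProduct.map (ρa b) (ρb c) := by
  simp [act2]

lemma act2_mul (G G' : H ⊗[k] H) :
    act2 k H A ρa ρb (G * G') = act2 k H A ρa ρb G ∘ₗ act2 k H A ρa ρb G' := by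
  induction G using TensorProduct.induction_on with
  | zero => simp
  | add u v hu hv => simp [add_mul, map_add, hu, hv, LinearMap.add_comp]
  | tmul b c =>
    induction G' using TensorProduct.induction_on with
    | zero => simp
    | add u v hu hv => simp [mul_add, map_add, hu, hv, LinearMap.comp_add]
    | tmul b' c' =>
      rw [Algebra.TensorProduct.tmul_mul_tmul, act2_tmul, act2_tmul, act2_tmul,
        map_mul, map_mul, Module.End.mul_eq_comp, Module.End.mul_eq_comp,
        TensorProduct.map_comp]

noncomputable def act3 :
    H ⊗[k] (H ⊗[k] H) →ₗ[k] (A ⊗[k] (A ⊗[k] A) →ₗ[k] A ⊗[k] (A ⊗[k] A)) :=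
  TensorProduct.homTensorHomMap (RingHom.id k) A (A ⊗[k] A) A (A ⊗[k] A) ∘ₗ
    TensorProduct.map ρa.toLinearMap (act2 k H A ρb ρc)

lemma act3_tmul (b : H) (G : H ⊗[k] H) :
    act3 k H A ρa ρb ρc (b ⊗ₜ[k] G) = TensorProduct.map (ρa b) (act2 k H A ρb ρc G) := by
  simp [act3]

lemma act3_mul (G G' : H ⊗[k] (H ⊗[k] H)) :
    act3 k H A ρa ρb ρc (G * G') = act3 k H A ρa ρb ρc G ∘ₗ act3 k H A ρa ρb ρc G' := by
  induction G using TensorProduct.induction_on with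
  | zero => simp
  | add u v hu hv => simp [add_mul, map_add, hu, hv, LinearMap.add_comp]
  | tmul b c =>
    induction G' using TensorProduct.induction_on with
    | zero => simp
    | add u v hu hv => simp [mul_add, map_add, hu, hv, LinearMap.comp_add]
    | tmul b' c' =>
      rw [Algebra.TensorProduct.tmul_mul_tmul, act3_tmul, act3_tmul, act3_tmul,
        map_mul, Module.End.mul_eq_comp, act2_mul, TensorProduct.map_comp]



section Steps

variable {k H A}
variable (ρ₁ ρ₂ : H →ₐ[k] Module.End k A)
variable (μ : A →ₗ[k] A →ₗ[k] A)

local notation "m" => TensorProduct.lift μ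
local notation "α" => TensorProduct.assoc k A A A

-- naturality helper, pure-tensor version of P1b below
lemma stepP1' (c : H) (P : H ⊗[k] H) :
    TensorProduct.map (act2 k H A ρ₂ ρ₂ P) (ρ₁ c) ∘ₗ (α).symm.toLinearMap
      = (α).symm.toLinearMap ∘ₗ
        act3 k H A ρ₂ ρ₂ ρ₁ ((TensorProduct.assoc k H H H) (P ⊗ₜ[k] c)) := by
  induction P using TensorProduct.induction_on with
  | zero => simp
  | add u v hu hv =>
      simp [TensorProduct.add_tmul, TensorProduct.map_add_left, hu, hv,
        LinearMap.add_comp, LinearMap.comp_add]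
  | tmul p q =>
    rw [act2_tmul, TensorProduct.assoc_tmul, act3_tmul, act2_tmul,
      TensorProduct.map_map_comp_assoc_symm_eq]

-- μ' invariance under ρ₂ in left slot of (A⊗A)⊗A
lemma stepP1a
    (hA2 : ∀ a : H, ρ₂ a ∘ₗ m = m ∘ₗ act2 k H A ρ₂ ρ₂ (Coalgebra.comul a))
    (G : H ⊗[k] H) :
    act2 k H A ρ₂ ρ₁ G ∘ₗ TensorProduct.map (m) LinearMap.id
      = TensorProduct.map (m) LinearMap.id ∘ₗ
        (TensorProduct.homTensorHomMap (RingHom.id k) (A ⊗[k] A) A (A ⊗[k] A) A ∘ₗ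
          TensorProduct.map (act2 k H A ρ₂ ρ₂ ∘ₗ Coalgebra.comul) ρ₁.toLinearMap) G := by
  induction G using TensorProduct.induction_on with
  | zero => simp
  | add u v hu hv =>
      simp only [map_add, LinearMap.comp_apply, LinearMap.add_comp, LinearMap.comp_add,
        TensorProduct.map_add_right, TensorProduct.map_add_left] at hu hv ⊢
      rw [hu, hv]
  | tmul a a' =>
    simp only [act2_tmul, LinearMap.coe_comp, Function.comp_apply,
      TensorProduct.map_tmul, TensorProduct.homTensorHomMap_apply,
      LinearMap.coe_comp, AlgHom.toLinearMap_apply, Function.comp_apply]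
    rw [← TensorProduct.map_comp, ← TensorProduct.map_comp, hA2 a,
      LinearMap.comp_id, LinearMap.id_comp]

lemma stepP1b (G : H ⊗[k] H) :
    (TensorProduct.homTensorHomMap (RingHom.id k) (A ⊗[k] A) A (A ⊗[k] A) A ∘ₗ
        TensorProduct.map (act2 k H A ρ₂ ρ₂ ∘ₗ Coalgebra.comul) ρ₁.toLinearMap) G ∘ₗ
      (α).symm.toLinearMap
      = (α).symm.toLinearMap ∘ₗ act3 k H A ρ₂ ρ₂ ρ₁ (comul12 k H G) := by
  induction G using TensorProduct.induction_on with
  | zero => simp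
  | add u v hu hv =>
      simp only [map_add, LinearMap.comp_apply, LinearMap.add_comp, LinearMap.comp_add,
        TensorProduct.map_add_right, TensorProduct.map_add_left] at hu hv ⊢
      rw [hu, hv]
  | tmul a a' =>
    simp only [comul12, LinearMap.coe_comp, Function.comp_apply, TensorProduct.map_tmul,
      TensorProduct.homTensorHomMap_apply, AlgHom.toLinearMap_apply,
      LinearEquiv.coe_coe, LinearMap.id_coe, id_eq]
    exact stepP1' ρ₁ ρ₂ a' (Coalgebra.comul a)

-- act3 with different middle action agree on ext13 image
lemma stepP3 (G : H ⊗[k] H) :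
    act3 k H A ρ₂ ρ₂ ρ₁ (ext13 k H G) = act3 k H A ρ₂ ρ₁ ρ₁ (ext13 k H G) := by
  induction G using TensorProduct.induction_on with
  | zero => simp
  | add u v hu hv => simp [map_add, hu, hv]
  | tmul a a' =>
    simp [ext13, act3_tmul, act2_tmul, map_one]

lemma stepP4 (G : H ⊗[k] H) :
    act3 k H A ρ₂ ρ₂ ρ₁ (ext23 k H G)
      = TensorProduct.map LinearMap.id (act2 k H A ρ₂ ρ₁ G) := by
  simp [ext23, act3_tmul, map_one, Module.End.one_eq_id]

lemma stepP6 (G : H ⊗[k] H) :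
    TensorProduct.map (act2 k H A ρ₂ ρ₁ G) LinearMap.id ∘ₗ (α).symm.toLinearMap
      = (α).symm.toLinearMap ∘ₗ act3 k H A ρ₂ ρ₁ ρ₁ (ext12 k H G) := by
  induction G using TensorProduct.induction_on with
  | zero => simp
  | add u v hu hv =>
      simp [map_add, TensorProduct.map_add_left, hu, hv,
        LinearMap.add_comp, LinearMap.comp_add]
  | tmul a a' =>
    simp only [ext12, act2_tmul, TensorProduct.map_tmul, LinearMap.id_coe, id_eq,
      TensorProduct.mk_apply, LinearMap.flip_apply, act3_tmul, act2_tmul, map_one,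
      Module.End.one_eq_id]
    exact TensorProduct.map_map_comp_assoc_symm_eq _ _ _

-- commuting the 1⊗Φ(G) factor past the act on slots 1,2
lemma stepP5 (hcomm : ∀ b b' : H, Commute (ρ₁ b) (ρ₂ b')) (G G' : H ⊗[k] H) :
    TensorProduct.map LinearMap.id (act2 k H A ρ₂ ρ₁ G) ∘ₗ act3 k H A ρ₂ ρ₁ ρ₁ (ext12 k H G')
      = act3 k H A ρ₂ ρ₁ ρ₁ (ext12 k H G') ∘ₗ
          TensorProduct.map LinearMap.id (act2 k H A ρ₂ ρ₁ G) := by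
  induction G using TensorProduct.induction_on with
  | zero => simp
  | add u v hu hv =>
      simp only [map_add, LinearMap.comp_apply, LinearMap.add_comp, LinearMap.comp_add,
        TensorProduct.map_add_right, TensorProduct.map_add_left] at hu hv ⊢
      rw [hu, hv]
  | tmul a a' =>
    induction G' using TensorProduct.induction_on with
    | zero => simp
    | add u v hu hv =>
      simp only [map_add, LinearMap.comp_apply, LinearMap.add_comp, LinearMap.comp_add,
        TensorProduct.map_add_right, TensorProduct.map_add_left] at hu hv ⊢
      rw [hu, hv]
    | tmul c c' =>
      simp only [ext12, act2_tmul, TensorProduct.map_tmul, LinearMap.id_coe, id_eq,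
        TensorProduct.mk_apply, LinearMap.flip_apply, act3_tmul, act2_tmul, map_one,
        Module.End.one_eq_id]
      rw [← TensorProduct.map_comp, ← TensorProduct.map_comp, ← TensorProduct.map_comp,
        ← TensorProduct.map_comp]
      rw [LinearMap.comp_id, LinearMap.id_comp, LinearMap.comp_id, LinearMap.id_comp]
      congr 2
      rw [← Module.End.mul_eq_comp, ← Module.End.mul_eq_comp]
      exact ((hcomm c' a).eq).symm

-- μ' invariance under ρ₁ in right slot of A⊗(A⊗A)
lemma stepP7
    (hA1 : ∀ a : H, ρ₁ a ∘ₗ m = m ∘ₗ act2 k H A ρ₁ ρ₁ (Coalgebra.comul a))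
    (G : H ⊗[k] H) :
    act2 k H A ρ₂ ρ₁ G ∘ₗ TensorProduct.map LinearMap.id (m)
      = TensorProduct.map LinearMap.id (m) ∘ₗ act3 k H A ρ₂ ρ₁ ρ₁ (comul23 k H G) := by
  induction G using TensorProduct.induction_on with
  | zero => simp
  | add u v hu hv =>
      simp only [map_add, LinearMap.comp_apply, LinearMap.add_comp, LinearMap.comp_add,
        TensorProduct.map_add_right, TensorProduct.map_add_left] at hu hv ⊢
      rw [hu, hv]
  | tmul a a' =>
    simp only [comul23, act2_tmul, TensorProduct.map_tmul, LinearMap.id_coe, id_eq,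
      act3_tmul]
    rw [← TensorProduct.map_comp, ← TensorProduct.map_comp, hA1 a',
      LinearMap.comp_id, LinearMap.id_comp]

lemma stepP8 (hassoc : ∀ x y z : A, μ (μ x y) z = μ x (μ y z)) :
    (m) ∘ₗ TensorProduct.map (m) LinearMap.id ∘ₗ (α).symm.toLinearMap
      = (m) ∘ₗ TensorProduct.map LinearMap.id (m) := by
  ext x y z
  simp [hassoc]

lemma part1final
    (hcomm : ∀ b b' : H, Commute (ρ₁ b) (ρ₂ b'))
    (hassoc : ∀ x y z : A, μ (μ x y) z = μ x (μ y z))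
    (hA1 : ∀ a : H, ρ₁ a ∘ₗ m = m ∘ₗ act2 k H A ρ₁ ρ₁ (Coalgebra.comul a))
    (hA2 : ∀ a : H, ρ₂ a ∘ₗ m = m ∘ₗ act2 k H A ρ₂ ρ₂ (Coalgebra.comul a))
    (R : H ⊗[k] H)
    (hR13_23 : comul12 k H R = ext13 k H R * ext23 k H R)
    (hR13_12 : comul23 k H R = ext13 k H R * ext12 k H R)
    (x y z : A) :
    TensorProduct.lift μ (act2 k H A ρ₂ ρ₁ R
        (TensorProduct.lift μ (act2 k H A ρ₂ ρ₁ R (x ⊗ₜ[k] y)) ⊗ₜ[k] z))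
      = TensorProduct.lift μ (act2 k H A ρ₂ ρ₁ R
          (x ⊗ₜ[k] TensorProduct.lift μ (act2 k H A ρ₂ ρ₁ R (y ⊗ₜ[k] z)))) := by
  have h6 := fun t => LinearMap.congr_fun (stepP6 ρ₁ ρ₂ R) t
  have h1a := fun t => LinearMap.congr_fun (stepP1a ρ₁ ρ₂ μ hA2 R) t
  have h1b := fun t => LinearMap.congr_fun (stepP1b ρ₁ ρ₂ R) t
  have h8 := fun t => LinearMap.congr_fun (stepP8 μ hassoc) t
  have h5 := fun t => LinearMap.congr_fun (stepP5 ρ₁ ρ₂ hcomm R R) t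
  have h7 := fun t => LinearMap.congr_fun (stepP7 ρ₁ ρ₂ μ hA1 R) t
  simp only [LinearMap.comp_apply, LinearEquiv.coe_coe] at h6 h1a h1b h8 h5 h7
  have e0 : TensorProduct.lift μ (act2 k H A ρ₂ ρ₁ R (x ⊗ₜ[k] y)) ⊗ₜ[k] z
      = TensorProduct.map (TensorProduct.lift μ) LinearMap.id
          (TensorProduct.map (act2 k H A ρ₂ ρ₁ R) LinearMap.id
            ((TensorProduct.assoc k A A A).symm (x ⊗ₜ[k] (y ⊗ₜ[k] z)))) := by
    simp
  rw [e0, h6, h1a, h1b, h8, hR13_23, act3_mul, LinearMap.comp_apply, stepP3 ρ₁ ρ₂ R,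
    stepP4 ρ₁ ρ₂ R, h5, ← LinearMap.comp_apply
      (act3 k H A ρ₂ ρ₁ ρ₁ ((ext13 k H) R)) (act3 k H A ρ₂ ρ₁ ρ₁ ((ext12 k H) R)),
    ← act3_mul, ← hR13_12, ← h7]
  simp

end Steps


section Part2

variable {k H A}
variable (ρ₁ ρ₂ : H →ₐ[k] Module.End k A)

/-- `Σ b ⊗ b' ↦ Σ ρ₁(b) ρ₂(b')`. -/
noncomputable def mlift : H ⊗[k] H →ₗ[k] Module.End k A :=
  TensorProduct.lift
    ((LinearMap.mul k (Module.End k A)).compl₁₂ ρ₁.toLinearMap ρ₂.toLinearMap)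

lemma mlift_tmul (b b' : H) : mlift ρ₁ ρ₂ (b ⊗ₜ[k] b') = ρ₁ b * ρ₂ b' := by
  simp [mlift, LinearMap.mul_apply']

lemma diagAct_eq : diagAct k H A ρ₁ ρ₂ = mlift ρ₁ ρ₂ ∘ₗ Coalgebra.comul := rfl

/-- `Σ b ⊗ b' ↦ Σ act2₁₁(Δb) ∘ act2₂₂(Δb')`. -/
noncomputable def nact : H ⊗[k] H →ₗ[k] Module.End k (A ⊗[k] A) :=
  TensorProduct.lift
    ((LinearMap.mul k (Module.End k (A ⊗[k] A))).compl₁₂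
      (act2 k H A ρ₁ ρ₁ ∘ₗ Coalgebra.comul) (act2 k H A ρ₂ ρ₂ ∘ₗ Coalgebra.comul))

lemma nact_tmul (b b' : H) :
    nact ρ₁ ρ₂ (b ⊗ₜ[k] b')
      = act2 k H A ρ₁ ρ₁ (Coalgebra.comul b) * act2 k H A ρ₂ ρ₂ (Coalgebra.comul b') := by
  simp [nact, LinearMap.mul_apply']

/-- diagonal double action on `A ⊗ A`. -/
noncomputable def dact : (H ⊗[k] H) ⊗[k] (H ⊗[k] H) →ₗ[k] Module.End k (A ⊗[k] A) :=
  TensorProduct.homTensorHomMap (RingHom.id k) A A A A ∘ₗ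
    TensorProduct.map (mlift ρ₁ ρ₂) (mlift ρ₁ ρ₂)

lemma dact_tmul (u v : H ⊗[k] H) :
    dact ρ₁ ρ₂ (u ⊗ₜ[k] v) = TensorProduct.map (mlift ρ₁ ρ₂ u) (mlift ρ₁ ρ₂ v) := by
  simp [dact]

/-- regroup `(c₁⊗c₂)⊗(c₃⊗c₄) ↦ c₁⊗((c₂⊗c₃)⊗c₄)`. -/
noncomputable def rearr : (H ⊗[k] H) ⊗[k] (H ⊗[k] H) →ₗ[k] H ⊗[k] ((H ⊗[k] H) ⊗[k] H) :=
  TensorProduct.map LinearMap.id (TensorProduct.assoc k H H H).symm.toLinearMap ∘ₗ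
    (TensorProduct.assoc k H H (H ⊗[k] H)).toLinearMap

lemma rearr_tmul (a b c d : H) :
    rearr ((a ⊗ₜ[k] b) ⊗ₜ[k] (c ⊗ₜ[k] d)) = a ⊗ₜ[k] ((b ⊗ₜ[k] c) ⊗ₜ[k] d) := by
  simp [rearr]

/-- regroup `c₁⊗((c₂⊗c₃)⊗c₄) ↦ (c₁⊗c₂)⊗(c₃⊗c₄)`. -/
noncomputable def shuffle : H ⊗[k] ((H ⊗[k] H) ⊗[k] H) →ₗ[k] (H ⊗[k] H) ⊗[k] (H ⊗[k] H) :=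
  (TensorProduct.assoc k H H (H ⊗[k] H)).symm.toLinearMap ∘ₗ
    TensorProduct.map LinearMap.id (TensorProduct.assoc k H H H).toLinearMap

lemma shuffle_tmul (a b c d : H) :
    shuffle (a ⊗ₜ[k] ((b ⊗ₜ[k] c) ⊗ₜ[k] d)) = (a ⊗ₜ[k] b) ⊗ₜ[k] (c ⊗ₜ[k] d) := by
  simp [shuffle]

/-- modify the middle pair by `f`. -/
noncomputable def midmap (f : H ⊗[k] H →ₗ[k] H ⊗[k] H) :
    H ⊗[k] ((H ⊗[k] H) ⊗[k] H) →ₗ[k] H ⊗[k] ((H ⊗[k] H) ⊗[k] H) :=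
  TensorProduct.map LinearMap.id (TensorProduct.map f LinearMap.id)

lemma midmap_tmul (f : H ⊗[k] H →ₗ[k] H ⊗[k] H) (a : H) (u : H ⊗[k] H) (d : H) :
    midmap f (a ⊗ₜ[k] (u ⊗ₜ[k] d)) = a ⊗ₜ[k] ((f u) ⊗ₜ[k] d) := by
  simp [midmap]

lemma mulRight_add' (u v : H ⊗[k] H) :
    LinearMap.mulRight k (u + v)
      = LinearMap.mulRight k u + LinearMap.mulRight k (A := H ⊗[k] H) v := by
  ext b; simp [mul_add]

lemma mulLeft_add' (u v : H ⊗[k] H) :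
    LinearMap.mulLeft k (u + v)
      = LinearMap.mulLeft k u + LinearMap.mulLeft k (A := H ⊗[k] H) v := by
  ext b; simp [add_mul]

lemma midmap_add (f g : H ⊗[k] H →ₗ[k] H ⊗[k] H) :
    midmap (k := k) (f + g) = midmap f + midmap g := by
  simp [midmap, TensorProduct.map_add_left, TensorProduct.map_add_right]

lemma lemL0 (μ : A →ₗ[k] A →ₗ[k] A)
    (hinv : ∀ b b' : H,
      (ρ₁ b * ρ₂ b') ∘ₗ TensorProduct.lift μ =
        TensorProduct.lift μ ∘ₗ
          (act2 k H A ρ₁ ρ₁ (Coalgebra.comul b) ∘ₗ act2 k H A ρ₂ ρ₂ (Coalgebra.comul b')))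
    (T : H ⊗[k] H) :
    mlift ρ₁ ρ₂ T ∘ₗ TensorProduct.lift μ = TensorProduct.lift μ ∘ₗ nact ρ₁ ρ₂ T := by
  induction T using TensorProduct.induction_on with
  | zero => simp
  | add u v hu hv =>
      simp only [map_add, LinearMap.add_comp, LinearMap.comp_add, hu, hv]
  | tmul b b' =>
      rw [mlift_tmul, nact_tmul, hinv b b']
      rfl

lemma lemL1
    (hcomm : ∀ b b' : H, Commute (ρ₁ b) (ρ₂ b'))
    (R P Q : H ⊗[k] H) :
    (act2 k H A ρ₁ ρ₁ P * act2 k H A ρ₂ ρ₂ Q) ∘ₗ act2 k H A ρ₂ ρ₁ R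
      = (dact ρ₁ ρ₂ ∘ₗ shuffle)
          (midmap (LinearMap.mulRight k R ∘ₗ (TensorProduct.comm k H H).toLinearMap)
            (rearr (P ⊗ₜ[k] Q))) := by
  induction P using TensorProduct.induction_on with
  | zero => simp [TensorProduct.zero_tmul]
  | add u v hu hv =>
      simp only [map_add, TensorProduct.add_tmul, add_mul, LinearMap.add_comp,
        LinearMap.comp_apply, hu, hv]
  | tmul p q =>
    induction Q using TensorProduct.induction_on with
    | zero => simp [TensorProduct.tmul_zero]
    | add u v hu hv =>
        simp only [map_add, TensorProduct.tmul_add, mul_add, LinearMap.add_comp,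
          LinearMap.comp_apply, hu, hv]
    | tmul r s =>
      induction R using TensorProduct.induction_on with
      | zero => simp [midmap, act2]
      | add u v hu hv =>
          rw [mulRight_add', LinearMap.add_comp, midmap_add, map_add, LinearMap.add_apply,
            map_add, LinearMap.comp_add, hu, hv]
      | tmul a a' =>
        rw [rearr_tmul, midmap_tmul]
        simp only [LinearMap.comp_apply, LinearEquiv.coe_coe, TensorProduct.comm_tmul,
          LinearMap.mulRight_apply, Algebra.TensorProduct.tmul_mul_tmul]
        rw [shuffle_tmul, dact_tmul, mlift_tmul, mlift_tmul, act2_tmul, act2_tmul, act2_tmul,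
          map_mul, map_mul]
        rw [Module.End.mul_eq_comp, ← TensorProduct.map_comp, ← TensorProduct.map_comp]
        congr 1 <;> simp only [← Module.End.mul_eq_comp, mul_assoc] <;>
          first
          | rfl
          | rw [← (hcomm a' s).eq]

lemma lemL2
    (hcomm : ∀ b b' : H, Commute (ρ₁ b) (ρ₂ b'))
    (R : H ⊗[k] H) (S : (H ⊗[k] H) ⊗[k] (H ⊗[k] H)) :
    act2 k H A ρ₂ ρ₁ R ∘ₗ dact ρ₁ ρ₂ S
      = (dact ρ₁ ρ₂ ∘ₗ shuffle) (midmap (LinearMap.mulLeft k R) (rearr S)) := by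
  induction S using TensorProduct.induction_on with
  | zero => simp
  | add u v hu hv =>
      simp only [map_add, LinearMap.comp_add, LinearMap.comp_apply, hu, hv]
  | tmul P Q =>
    induction P using TensorProduct.induction_on with
    | zero => simp [TensorProduct.zero_tmul, dact]
    | add u v hu hv =>
        simp only [map_add, TensorProduct.add_tmul, LinearMap.comp_add, LinearMap.comp_apply,
          hu, hv]
    | tmul p q =>
      induction Q using TensorProduct.induction_on with
      | zero => simp [TensorProduct.tmul_zero, dact]
      | add u v hu hv =>
          simp only [map_add, TensorProduct.tmul_add, LinearMap.comp_add,
            LinearMap.comp_apply, hu, hv]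
      | tmul r s =>
        induction R using TensorProduct.induction_on with
        | zero => simp [act2, midmap]
        | add u v hu hv =>
            rw [mulLeft_add', midmap_add, map_add, LinearMap.add_apply, map_add,
              LinearMap.add_comp, hu, hv]
        | tmul a a' =>
          rw [rearr_tmul, midmap_tmul]
          simp only [LinearMap.mulLeft_apply, Algebra.TensorProduct.tmul_mul_tmul,
            LinearMap.comp_apply]
          rw [shuffle_tmul, dact_tmul, dact_tmul, mlift_tmul, mlift_tmul, mlift_tmul,
            mlift_tmul, act2_tmul, map_mul, map_mul]
          rw [Module.End.mul_eq_comp, Module.End.mul_eq_comp, Module.End.mul_eq_comp,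
            Module.End.mul_eq_comp, Module.End.mul_eq_comp, Module.End.mul_eq_comp,
            ← TensorProduct.map_comp]
          congr 1 <;> simp only [← Module.End.mul_eq_comp, mul_assoc] <;>
            first
            | rfl
            | rw [← mul_assoc, ← (hcomm p a).eq, mul_assoc]

lemma rearr_tmul' (a b : H) (w : H ⊗[k] H) :
    rearr ((a ⊗ₜ[k] b) ⊗ₜ[k] w)
      = a ⊗ₜ[k] ((TensorProduct.assoc k H H H).symm (b ⊗ₜ[k] w)) := by
  simp [rearr]

lemma lemC2 (t : (H ⊗[k] H) ⊗[k] H) :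
    rearr (Coalgebra.comul.lTensor (H ⊗[k] H) t)
      = TensorProduct.map LinearMap.id
          ((TensorProduct.assoc k H H H).symm.toLinearMap ∘ₗ
            Coalgebra.comul.lTensor H)
          ((TensorProduct.assoc k H H H) t) := by
  induction t using TensorProduct.induction_on with
  | zero => simp
  | add u v hu hv => simp only [map_add, hu, hv, LinearEquiv.map_add]
  | tmul u c =>
    induction u using TensorProduct.induction_on with
    | zero => simp [TensorProduct.zero_tmul]
    | add u v hu hv =>
        simp only [TensorProduct.add_tmul, map_add, hu, hv, LinearEquiv.map_add]
    | tmul a b =>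
      rw [LinearMap.lTensor_tmul, rearr_tmul']
      simp [LinearMap.lTensor_tmul]

lemma lemC1 (u : H ⊗[k] H) :
    TensorProduct.map (Coalgebra.comul (R := k)) Coalgebra.comul u
      = Coalgebra.comul.lTensor (H ⊗[k] H) (Coalgebra.comul.rTensor H u) := by
  induction u using TensorProduct.induction_on with
  | zero => simp
  | add u v hu hv => simp only [map_add, hu, hv]
  | tmul a b => simp

lemma lemL4op (R Rinv : H ⊗[k] H) (hR' : Rinv * R = 1)
    (hRΔ : ∀ b : H,
      (TensorProduct.comm k H H) (Coalgebra.comul (R := k) b) =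
        R * Coalgebra.comul b * Rinv) :
    (LinearMap.mulRight k R ∘ₗ (TensorProduct.comm k H H).toLinearMap) ∘ₗ
        (Coalgebra.comul (R := k) (A := H))
      = LinearMap.mulLeft k R ∘ₗ Coalgebra.comul := by
  ext b
  simp only [LinearMap.comp_apply, LinearEquiv.coe_coe, LinearMap.mulRight_apply,
    LinearMap.mulLeft_apply, hRΔ b]
  rw [mul_assoc (R * Coalgebra.comul b) Rinv R, hR', mul_one]

lemma keymid (R Rinv : H ⊗[k] H) (hR' : Rinv * R = 1)
    (hRΔ : ∀ b : H,
      (TensorProduct.comm k H H) (Coalgebra.comul (R := k) b) =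
        R * Coalgebra.comul b * Rinv) (b : H) :
    midmap (LinearMap.mulRight k R ∘ₗ (TensorProduct.comm k H H).toLinearMap)
        (rearr (TensorProduct.map Coalgebra.comul Coalgebra.comul (Coalgebra.comul b)))
      = midmap (LinearMap.mulLeft k R)
          (rearr (TensorProduct.map Coalgebra.comul Coalgebra.comul (Coalgebra.comul b))) := by
  rw [lemC1, (Coalgebra.coassoc_symm_apply b).symm, lemC2, LinearEquiv.apply_symm_apply]
  set g := (TensorProduct.assoc k H H H).symm.toLinearMap ∘ₗ
    (Coalgebra.comul (R := k) (A := H)).lTensor H with hg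
  generalize Coalgebra.comul (R := k) b = w
  induction w using TensorProduct.induction_on with
  | zero => simp
  | add u v hu hv => simp only [map_add, hu, hv]
  | tmul c d =>
    simp only [LinearMap.lTensor_tmul, TensorProduct.map_tmul, LinearMap.id_coe, id_eq]
    have hgd : g (Coalgebra.comul d)
        = (Coalgebra.comul (R := k) (A := H)).rTensor H (Coalgebra.comul d) := by
      rw [hg]
      simp only [LinearMap.comp_apply, LinearEquiv.coe_coe]
      exact Coalgebra.coassoc_symm_apply d
    rw [hgd]
    generalize Coalgebra.comul (R := k) d = v
    induction v using TensorProduct.induction_on with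
    | zero => simp [TensorProduct.tmul_zero]
    | add u v hu hv => simp only [map_add, TensorProduct.tmul_add, hu, hv]
    | tmul p q =>
      rw [LinearMap.rTensor_tmul, midmap_tmul, midmap_tmul]
      have h4 := LinearMap.congr_fun (lemL4op R Rinv hR' hRΔ) p
      simp only [LinearMap.comp_apply] at h4
      simp only [LinearMap.comp_apply]
      rw [h4]

lemma lemL3
    (hcomm : ∀ b b' : H, Commute (ρ₁ b) (ρ₂ b'))
    (R : H ⊗[k] H) (T : H ⊗[k] H) :
    nact ρ₁ ρ₂ T ∘ₗ act2 k H A ρ₂ ρ₁ R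
      = (dact ρ₁ ρ₂ ∘ₗ shuffle)
          (midmap (LinearMap.mulRight k R ∘ₗ (TensorProduct.comm k H H).toLinearMap)
            (rearr (TensorProduct.map Coalgebra.comul Coalgebra.comul T))) := by
  induction T using TensorProduct.induction_on with
  | zero => simp
  | add u v hu hv =>
      simp only [map_add, LinearMap.add_comp, LinearMap.comp_apply, hu, hv]
  | tmul b b' =>
      rw [nact_tmul, TensorProduct.map_tmul]
      exact lemL1 ρ₁ ρ₂ hcomm R (Coalgebra.comul b) (Coalgebra.comul b')

lemma part2final (μ : A →ₗ[k] A →ₗ[k] A)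
    (hcomm : ∀ b b' : H, Commute (ρ₁ b) (ρ₂ b'))
    (hinv : ∀ b b' : H,
      (ρ₁ b * ρ₂ b') ∘ₗ TensorProduct.lift μ =
        TensorProduct.lift μ ∘ₗ
          (act2 k H A ρ₁ ρ₁ (Coalgebra.comul b) ∘ₗ act2 k H A ρ₂ ρ₂ (Coalgebra.comul b')))
    (R Rinv : H ⊗[k] H) (hR' : Rinv * R = 1)
    (hRΔ : ∀ b : H,
      (TensorProduct.comm k H H) (Coalgebra.comul (R := k) b) =
        R * Coalgebra.comul b * Rinv) (b : H) :
    diagAct k H A ρ₁ ρ₂ b ∘ₗ (TensorProduct.lift μ ∘ₗ act2 k H A ρ₂ ρ₁ R) =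
      (TensorProduct.lift μ ∘ₗ act2 k H A ρ₂ ρ₁ R) ∘ₗ
        TensorProduct.homTensorHomMap (RingHom.id k) A A A A
          (TensorProduct.map (diagAct k H A ρ₁ ρ₂) (diagAct k H A ρ₁ ρ₂)
            (Coalgebra.comul b)) := by
  have hdg : diagAct k H A ρ₁ ρ₂ b = mlift ρ₁ ρ₂ (Coalgebra.comul b) := rfl
  have hdd : TensorProduct.homTensorHomMap (RingHom.id k) A A A A
        (TensorProduct.map (diagAct k H A ρ₁ ρ₂) (diagAct k H A ρ₁ ρ₂)
          (Coalgebra.comul b))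
      = dact ρ₁ ρ₂
          (TensorProduct.map Coalgebra.comul Coalgebra.comul (Coalgebra.comul b)) := by
    rw [diagAct_eq, TensorProduct.map_comp]
    rfl
  rw [hdg, hdd, ← LinearMap.comp_assoc, lemL0 ρ₁ ρ₂ μ hinv, LinearMap.comp_assoc,
    lemL3 ρ₁ ρ₂ hcomm, keymid R Rinv hR' hRΔ b, ← lemL2 ρ₁ ρ₂ hcomm,
    LinearMap.comp_assoc]

end Part2





end Helpers

/-- **Lemma 5.1**: if `μ` is an associative multiplication on `A` invariant under two
commuting `H`-module structures `ρ₁, ρ₂` (i.e. under the `H ⊗ H`-action), and `R` is a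
universal R-matrix for `H`, then `μ′(x,y) = Σ μ(ρ₂(R¹)·x, ρ₁(R²)·y)` is associative and
invariant under the diagonal action `ρ(b) = Σ ρ₁(b⁽¹⁾)ρ₂(b⁽²⁾)`. -/
theorem twist_by_R_matrix_of_two_commuting_actions
    (R Rinv : H ⊗[k] H) (hR : R * Rinv = 1) (hR' : Rinv * R = 1)
    (hRΔ : ∀ b : H,
      (TensorProduct.comm k H H) (Coalgebra.comul (R := k) b) =
        R * Coalgebra.comul b * Rinv)
    (hR13_23 : comul12 k H R = ext13 k H R * ext23 k H R)
    (hR13_12 : comul23 k H R = ext13 k H R * ext12 k H R)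
    (ρ₁ ρ₂ : H →ₐ[k] Module.End k A)
    (hcomm : ∀ b b' : H, Commute (ρ₁ b) (ρ₂ b'))
    (μ : A →ₗ[k] A →ₗ[k] A)
    (hassoc : ∀ x y z : A, μ (μ x y) z = μ x (μ y z))
    (hinv : ∀ b b' : H,
      (ρ₁ b * ρ₂ b') ∘ₗ TensorProduct.lift μ =
        TensorProduct.lift μ ∘ₗ
          (act2 k H A ρ₁ ρ₁ (Coalgebra.comul b) ∘ₗ act2 k H A ρ₂ ρ₂ (Coalgebra.comul b'))) :
    (∀ x y z : A,
      (fun a b => TensorProduct.lift μ (act2 k H A ρ₂ ρ₁ R (a ⊗ₜ[k] b)))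
          ((fun a b => TensorProduct.lift μ (act2 k H A ρ₂ ρ₁ R (a ⊗ₜ[k] b))) x y) z =
      (fun a b => TensorProduct.lift μ (act2 k H A ρ₂ ρ₁ R (a ⊗ₜ[k] b))) x
          ((fun a b => TensorProduct.lift μ (act2 k H A ρ₂ ρ₁ R (a ⊗ₜ[k] b))) y z)) ∧
    (∀ b : H,
      diagAct k H A ρ₁ ρ₂ b ∘ₗ (TensorProduct.lift μ ∘ₗ act2 k H A ρ₂ ρ₁ R) =
        (TensorProduct.lift μ ∘ₗ act2 k H A ρ₂ ρ₁ R) ∘ₗ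
          TensorProduct.homTensorHomMap (RingHom.id k) A A A A
            (TensorProduct.map (diagAct k H A ρ₁ ρ₂) (diagAct k H A ρ₁ ρ₂)
              (Coalgebra.comul b))) := by
  have act2_one : ∀ (ρa ρb : H →ₐ[k] Module.End k A),
      act2 k H A ρa ρb 1 = LinearMap.id := by
    intro ρa ρb
    rw [Algebra.TensorProduct.one_def, act2_tmul]
    simp [TensorProduct.map_id, Module.End.one_eq_id]
  have hA1 : ∀ a : H, ρ₁ a ∘ₗ TensorProduct.lift μ
      = TensorProduct.lift μ ∘ₗ act2 k H A ρ₁ ρ₁ (Coalgebra.comul a) := by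
    intro a
    have h := hinv a 1
    rw [map_one, mul_one, Bialgebra.comul_one, act2_one, LinearMap.comp_id] at h
    exact h
  have hA2 : ∀ a : H, ρ₂ a ∘ₗ TensorProduct.lift μ
      = TensorProduct.lift μ ∘ₗ act2 k H A ρ₂ ρ₂ (Coalgebra.comul a) := by
    intro a
    have h := hinv 1 a
    rw [map_one, one_mul, Bialgebra.comul_one, act2_one, LinearMap.id_comp] at h
    exact h
  constructor
  · intro x y z
    exact part1final ρ₁ ρ₂ μ hcomm hassoc hA1 hA2 R hR13_23 hR13_12 x y z
  · intro b
    exact part2final ρ₁ ρ₂ μ hcomm hinv R Rinv hR' hRΔ b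


end Stmt7
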